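/- If a measurable function u : [a,b] → ℝ is m-times L^{1,ω} differentiable at almost every x ∈ (a,b), then for every ε > 0 there exists a compact set K ⊆ [a,b] with |[a,b] \ K| < ε together with uniform constants C > 0 and ρ₀ > 0 such that for every x ∈ K: B(x,ρ₀) ⊆ (a,b) and there exist real coefficients a_0(x),…,a_m(x) with ⨍_{B(x,ρ)} |u(y) − ∑_{i=0}^m a_i(x)(y−x)^i| dy ≤ C ω(ρ) ρ^m for all 0 < ρ < ρ₀. -/

import Mathlib

open MeasureTheory Filter Set

/-- The set of points where the estimate holds with uniform parameters indexed by n. -/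
def ESet (a b : ℝ) (m : ℕ) (ω u : ℝ → ℝ) (n : ℕ) : Set ℝ :=
  {x | x ∈ Set.Icc (a + 2 / (n + 1)) (b - 2 / (n + 1)) ∧
    ∃ c : ℕ → ℝ, (∀ i, |c i| ≤ (n : ℝ) + 1) ∧
      ∀ ρ : ℝ, 0 < ρ → ρ < 1 / (n + 1) →
        (2 * ρ)⁻¹ * ∫ y in (x - ρ)..(x + ρ),
            |u y - ∑ i ∈ Finset.range (m + 1), c i * (y - x) ^ i|
          ≤ ((n : ℝ) + 1) * ω ρ * ρ ^ m}

lemma ESet_subset_Icc {a b : ℝ} {m : ℕ} {ω u : ℝ → ℝ} {n : ℕ} :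
    ESet a b m ω u n ⊆ Set.Icc a b := by
  intro x hx
  have h1 : (0:ℝ) < 2 / (n + 1) := by positivity
  have := hx.1
  constructor <;> [linarith [this.1]; linarith [this.2]]

lemma Ioc_subset_Icc_of_mem {a b : ℝ} {n : ℕ} {x ρ : ℝ}
    (hx : x ∈ Set.Icc (a + 2 / (n + 1)) (b - 2 / (n + 1)))
    (hρ0 : 0 < ρ) (hρ1 : ρ < 1 / (n + 1)) :
    Set.Ioc (x - ρ) (x + ρ) ⊆ Set.Icc a b := by
  have h1 : (0:ℝ) < 1 / (n + 1) := by positivity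
  have h2 : (2:ℝ) / (n + 1) = 1 / (n + 1) + 1 / (n + 1) := by ring
  intro y hy
  constructor
  · linarith [hx.1, hy.1, hy.2]
  · linarith [hx.2, hy.1, hy.2]

set_option maxHeartbeats 1600000 in
/-- Each `ESet` is closed. -/
lemma ESet_closed (a b : ℝ) (m : ℕ) (ω u : ℝ → ℝ) (hu : IntegrableOn u (Set.Icc a b))
    (n : ℕ) : IsClosed (ESet a b m ω u n) := by
  have hupos : (0:ℝ) < 1 / (n+1) := by positivity
  apply IsSeqClosed.isClosed
  intro xs x hmem hlim
  choose c hcb hck using fun k => (hmem k).2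
  -- compactness of coefficient space
  have hKc : IsCompact (Set.Icc (fun _ : ℕ => -((n:ℝ)+1)) (fun _ : ℕ => (n:ℝ)+1)) :=
    isCompact_Icc
  have hmemc : ∀ k, c k ∈ Set.Icc (fun _ : ℕ => -((n:ℝ)+1)) (fun _ : ℕ => (n:ℝ)+1) := by
    intro k
    constructor <;> intro i
    · exact neg_le_of_abs_le (hcb k i)
    · exact le_of_abs_le (hcb k i)
  obtain ⟨d, hd, φ, hφ, hφt⟩ := hKc.tendsto_subseq hmemc
  have hxt : Tendsto (fun k => xs (φ k)) atTop (nhds x) := hlim.comp hφ.tendsto_atTop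
  have hdt : ∀ i, Tendsto (fun k => c (φ k) i) atTop (nhds (d i)) := by
    intro i
    exact tendsto_pi_nhds.mp hφt i
  have hxIcc : x ∈ Set.Icc (a + 2 / (n + 1)) (b - 2 / (n + 1)) :=
    isClosed_Icc.mem_of_tendsto hlim (Filter.Eventually.of_forall fun k => (hmem k).1)
  refine ⟨hxIcc, d, ?_, ?_⟩
  · intro i
    exact abs_le.mpr ⟨hd.1 i, hd.2 i⟩
  intro ρ hρ0 hρ1
  set μ := volume.restrict (Set.Icc a b) with hμ
  haveI : IsFiniteMeasure μ := by
    constructor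
    rw [hμ, Measure.restrict_apply_univ]
    exact measure_Icc_lt_top
  -- the integrands as indicators
  set F : ℕ → ℝ → ℝ := fun k y => (Set.Ioc (xs (φ k) - ρ) (xs (φ k) + ρ)).indicator
      (fun y => |u y - ∑ i ∈ Finset.range (m + 1), c (φ k) i * (y - xs (φ k)) ^ i|) y with hF
  set G : ℝ → ℝ := fun y => (Set.Ioc (x - ρ) (x + ρ)).indicator
      (fun y => |u y - ∑ i ∈ Finset.range (m + 1), d i * (y - x) ^ i|) y with hG
  -- rewriting interval integrals as integrals of indicators over μ
  have key : ∀ (z : ℝ) (e : ℕ → ℝ), z ∈ Set.Icc (a + 2 / (n + 1)) (b - 2 / (n + 1)) →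
      (∫ y in (z - ρ)..(z + ρ), |u y - ∑ i ∈ Finset.range (m + 1), e i * (y - z) ^ i|)
      = ∫ y, (Set.Ioc (z - ρ) (z + ρ)).indicator
          (fun y => |u y - ∑ i ∈ Finset.range (m + 1), e i * (y - z) ^ i|) y ∂μ := by
    intro z e hz
    rw [intervalIntegral.integral_of_le (by linarith), integral_indicator measurableSet_Ioc,
      hμ, Measure.restrict_restrict measurableSet_Ioc,
      Set.inter_eq_self_of_subset_left (Ioc_subset_Icc_of_mem hz hρ0 hρ1)]
  -- dominated convergence
  have hbound_int : Integrable (fun y => |u y| + ((m:ℝ) + 1) * ((n:ℝ) + 1)) μ :=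
    hu.abs.add (integrable_const _)
  have hmeas : ∀ k, AEStronglyMeasurable (F k) μ := by
    intro k
    apply AEStronglyMeasurable.indicator _ measurableSet_Ioc
    have h1 : AEStronglyMeasurable
        (fun y => u y - ∑ i ∈ Finset.range (m + 1), c (φ k) i * (y - xs (φ k)) ^ i) μ := by
      apply hu.aestronglyMeasurable.sub
      exact (Continuous.aestronglyMeasurable (by continuity))
    have := h1.norm
    simpa [Real.norm_eq_abs] using this
  have hbd : ∀ k, ∀ᵐ y ∂μ, ‖F k y‖ ≤ |u y| + ((m:ℝ) + 1) * ((n:ℝ) + 1) := by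
    intro k
    filter_upwards with y
    simp only [Real.norm_eq_abs, hF]
    by_cases hy : y ∈ Set.Ioc (xs (φ k) - ρ) (xs (φ k) + ρ)
    · rw [Set.indicator_of_mem hy, abs_abs]
      have hsum : |∑ i ∈ Finset.range (m + 1), c (φ k) i * (y - xs (φ k)) ^ i|
          ≤ ((m:ℝ) + 1) * ((n:ℝ) + 1) := by
        calc |∑ i ∈ Finset.range (m + 1), c (φ k) i * (y - xs (φ k)) ^ i|
            ≤ ∑ i ∈ Finset.range (m + 1), |c (φ k) i * (y - xs (φ k)) ^ i| :=
              Finset.abs_sum_le_sum_abs _ _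
          _ ≤ ∑ i ∈ Finset.range (m + 1), ((n:ℝ) + 1) := by
              apply Finset.sum_le_sum
              intro i _
              rw [abs_mul, abs_pow]
              have h1 : |y - xs (φ k)| ≤ 1 := by
                have hle1 : 1 / ((n:ℝ) + 1) ≤ 1 := by
                  rw [div_le_one (by positivity)]
                  have : (0:ℝ) ≤ (n:ℝ) := Nat.cast_nonneg n
                  linarith
                rw [abs_le]
                have := hy.1; have := hy.2
                constructor <;> linarith
              have h2 : |y - xs (φ k)| ^ i ≤ 1 := pow_le_one₀ (abs_nonneg _) h1
              calc |c (φ k) i| * |y - xs (φ k)| ^ i ≤ ((n:ℝ)+1) * 1 :=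
                    mul_le_mul (hcb _ i) h2 (by positivity) (by positivity)
                _ = (n:ℝ) + 1 := mul_one _
          _ = ((m:ℝ) + 1) * ((n:ℝ) + 1) := by
              rw [Finset.sum_const, Finset.card_range]
              push_cast; ring
      calc |u y - ∑ i ∈ Finset.range (m + 1), c (φ k) i * (y - xs (φ k)) ^ i|
          ≤ |u y| + |∑ i ∈ Finset.range (m + 1), c (φ k) i * (y - xs (φ k)) ^ i| :=
            abs_sub _ _
        _ ≤ |u y| + ((m:ℝ) + 1) * ((n:ℝ) + 1) := by linarith
    · rw [Set.indicator_of_notMem hy, abs_zero]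
      positivity
  have hae : ∀ᵐ y ∂μ, y ≠ x - ρ ∧ y ≠ x + ρ := by
    have h1 : volume ({x - ρ, x + ρ} : Set ℝ) = 0 := by
      apply measure_union_null <;> exact measure_singleton _
    have h2 : μ ({x - ρ, x + ρ} : Set ℝ) = 0 :=
      le_antisymm (le_trans (Measure.restrict_le_self _) h1.le) (zero_le)
    filter_upwards [measure_eq_zero_iff_ae_notMem.mp h2] with y hy
    simp only [Set.mem_insert_iff, Set.mem_singleton_iff] at hy
    push_neg at hy
    exact hy
  have hconv : ∀ᵐ y ∂μ, Tendsto (fun k => F k y) atTop (nhds (G y)) := by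
    filter_upwards [hae] with y hy
    have hpt : Tendsto (fun k => |u y - ∑ i ∈ Finset.range (m + 1),
        c (φ k) i * (y - xs (φ k)) ^ i|) atTop
        (nhds (|u y - ∑ i ∈ Finset.range (m + 1), d i * (y - x) ^ i|)) := by
      apply Filter.Tendsto.abs
      apply Filter.Tendsto.sub tendsto_const_nhds
      apply tendsto_finset_sum
      intro i _
      exact (hdt i).mul ((tendsto_const_nhds.sub hxt).pow i)
    rcases lt_or_ge (x - ρ) y with hy1 | hy1
    · rcases lt_or_ge y (x + ρ) with hy2 | hy2
      · -- y in the open interval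
        have hev : (fun k => F k y) =ᶠ[atTop] (fun k => |u y - ∑ i ∈ Finset.range (m + 1),
            c (φ k) i * (y - xs (φ k)) ^ i|) := by
          filter_upwards [((hxt.sub_const ρ).eventually_lt_const hy1),
            ((hxt.add_const ρ).eventually_const_lt hy2)] with k hk1 hk2
          exact Set.indicator_of_mem (Set.mem_Ioc.mpr ⟨hk1, hk2.le⟩) _
        have hGy : G y = |u y - ∑ i ∈ Finset.range (m + 1), d i * (y - x) ^ i| :=
          Set.indicator_of_mem (Set.mem_Ioc.mpr ⟨hy1, hy2.le⟩) _
        rw [hGy]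
        exact hpt.congr' hev.symm
      · -- y ≥ x + ρ, in fact y > x + ρ since y ≠ x + ρ
        have hy2' : x + ρ < y := lt_of_le_of_ne hy2 (Ne.symm hy.2)
        have hev : (fun k => F k y) =ᶠ[atTop] (fun _ => 0) := by
          filter_upwards [(hxt.add_const ρ).eventually_lt_const hy2'] with k hk
          exact Set.indicator_of_notMem (fun hmem' => absurd hmem'.2 (not_le.mpr hk)) _
        have hGy : G y = 0 :=
          Set.indicator_of_notMem (fun hmem' => absurd hmem'.2 (not_le.mpr hy2')) _
        rw [hGy]
        exact tendsto_const_nhds.congr' hev.symm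
    · -- y ≤ x - ρ, in fact y < x - ρ
      have hy1' : y < x - ρ := lt_of_le_of_ne hy1 hy.1
      have hev : (fun k => F k y) =ᶠ[atTop] (fun _ => 0) := by
        filter_upwards [(hxt.sub_const ρ).eventually_const_lt hy1'] with k hk
        exact Set.indicator_of_notMem (fun hmem' => absurd hmem'.1 (not_lt.mpr hk.le)) _
      have hGy : G y = 0 :=
        Set.indicator_of_notMem (fun hmem' => absurd hmem'.1 (not_lt.mpr hy1'.le)) _
      rw [hGy]
      exact tendsto_const_nhds.congr' hev.symm
  have hDCT : Tendsto (fun k => ∫ y, F k y ∂μ) atTop (nhds (∫ y, G y ∂μ)) :=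
    tendsto_integral_of_dominated_convergence _ hmeas hbound_int hbd hconv
  -- conclude
  have hlimle : Tendsto (fun k => (2 * ρ)⁻¹ * ∫ y, F k y ∂μ) atTop
      (nhds ((2 * ρ)⁻¹ * ∫ y, G y ∂μ)) := hDCT.const_mul _
  have hineq : ∀ k, (2 * ρ)⁻¹ * ∫ y, F k y ∂μ ≤ ((n:ℝ) + 1) * ω ρ * ρ ^ m := by
    intro k
    rw [← key (xs (φ k)) (c (φ k)) (hmem (φ k)).1]
    exact hck (φ k) ρ hρ0 hρ1
  have := le_of_tendsto hlimle (Filter.Eventually.of_forall hineq)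
  rwa [key x d hxIcc]

lemma ESet_mono (a b : ℝ) (m : ℕ) (ω u : ℝ → ℝ)
    (hmono : MonotoneOn ω (Set.Ici 0)) (h0 : ω 0 = 0) :
    Monotone (ESet a b m ω u) := by
  apply monotone_nat_of_le_succ
  intro n x hx
  obtain ⟨hxI, c, hcb, hc⟩ := hx
  have hcast : ((n + 1 : ℕ) : ℝ) = (n : ℝ) + 1 := by push_cast; ring
  have h21 : (2:ℝ) / ((n:ℝ) + 1 + 1) ≤ 2 / ((n:ℝ) + 1) := by
    apply div_le_div_of_nonneg_left (by norm_num) (by positivity) (by linarith)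
  have h11 : (1:ℝ) / ((n:ℝ) + 1 + 1) ≤ 1 / ((n:ℝ) + 1) := by
    apply div_le_div_of_nonneg_left (by norm_num) (by positivity) (by linarith)
  refine ⟨?_, c, ?_, ?_⟩
  · rw [Set.mem_Icc, hcast]
    exact ⟨by linarith [hxI.1], by linarith [hxI.2]⟩
  · intro i
    rw [hcast]
    linarith [hcb i]
  · intro ρ hρ0 hρ1
    rw [hcast] at hρ1 ⊢
    have hρ1' : ρ < 1 / ((n:ℝ) + 1) := lt_of_lt_of_le hρ1 h11
    have hωρ : 0 ≤ ω ρ := by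
      rw [← h0]
      exact hmono (Set.mem_Ici.mpr le_rfl) (Set.mem_Ici.mpr hρ0.le) hρ0.le
    have h1 := hc ρ hρ0 hρ1'
    have h2 : ((n:ℝ) + 1) * (ω ρ * ρ ^ m) ≤ ((n:ℝ) + 1 + 1) * (ω ρ * ρ ^ m) :=
      mul_le_mul_of_nonneg_right (by linarith) (mul_nonneg hωρ (pow_nonneg hρ0.le m))
    nlinarith [h1, h2]

/-- If u ∈ L¹([a,b]) is m-times L^{1,ω} differentiable at almost every x ∈ (a,b), then
for every ε > 0 there is a compact K ⊆ [a,b] with |[a,b] \ K| < ε on which u is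
m-times L^{1,ω} differentiable with uniform parameters C, ρ₀. -/
theorem uniform_parameters (a b : ℝ) (hab : a < b) (m : ℕ) (ω : ℝ → ℝ)
    (hcont : ContinuousOn ω (Set.Ici 0))
    (hmono : MonotoneOn ω (Set.Ici 0))
    (hconc : ConcaveOn ℝ (Set.Ici 0) ω)
    (h0 : ω 0 = 0)
    (u : ℝ → ℝ) (hu : IntegrableOn u (Set.Icc a b))
    (hdiff : ∀ᵐ x ∂volume, x ∈ Set.Ioo a b →
      ∃ (c : ℕ → ℝ) (Cx ρx : ℝ), 0 < Cx ∧ 0 < ρx ∧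
        Set.Ioo (x - ρx) (x + ρx) ⊆ Set.Ioo a b ∧
        ∀ ρ : ℝ, 0 < ρ → ρ < ρx →
          (2 * ρ)⁻¹ * ∫ y in (x - ρ)..(x + ρ),
              |u y - ∑ i ∈ Finset.range (m + 1), c i * (y - x) ^ i|
            ≤ Cx * ω ρ * ρ ^ m) :
    ∀ ε > 0, ∃ K : Set ℝ, IsCompact K ∧ K ⊆ Set.Icc a b ∧
      volume (Set.Icc a b \ K) < ENNReal.ofReal ε ∧
      ∃ C > 0, ∃ ρ₀ > 0, ∀ x ∈ K,
        Set.Ioo (x - ρ₀) (x + ρ₀) ⊆ Set.Ioo a b ∧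
        ∃ c : ℕ → ℝ, ∀ ρ : ℝ, 0 < ρ → ρ < ρ₀ →
          (2 * ρ)⁻¹ * ∫ y in (x - ρ)..(x + ρ),
              |u y - ∑ i ∈ Finset.range (m + 1), c i * (y - x) ^ i|
            ≤ C * ω ρ * ρ ^ m := by
  intro ε hε
  -- a.e. coverage of (a,b) by the sets ESet n
  have hcov : ∀ᵐ x ∂volume, x ∈ Set.Ioo a b → x ∈ ⋃ n, ESet a b m ω u n := by
    filter_upwards [hdiff] with x hx hxIoo
    obtain ⟨c, Cx, ρx, hCx, hρx, hsub, hineq⟩ := hx hxIoo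
    have ha : a ≤ x - ρx := by
      by_contra h
      push_neg at h
      set t := (x - ρx + min a (x + ρx)) / 2 with ht
      have h1 : x - ρx < min a (x + ρx) := lt_min h (by linarith [hxIoo.1])
      have ht1 : x - ρx < t := by
        rw [ht]; linarith
      have ht2 : t < x + ρx := by
        have := min_le_right a (x + ρx); rw [ht]; linarith
      have hta : t < a := by
        have := min_le_left a (x + ρx); rw [ht]; linarith
      exact absurd (hsub ⟨ht1, ht2⟩).1 (not_lt.mpr hta.le)
    have hb : x + ρx ≤ b := by
      by_contra h
      push_neg at h
      set t := (max b (x - ρx) + (x + ρx)) / 2 with ht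
      have h1 : max b (x - ρx) < x + ρx := max_lt h (by linarith)
      have ht1 : x - ρx < t := by
        have := le_max_right b (x - ρx); rw [ht]; linarith
      have ht2 : t < x + ρx := by
        rw [ht]; linarith
      have htb : b < t := by
        have := le_max_left b (x - ρx); rw [ht]; linarith
      exact absurd (hsub ⟨ht1, ht2⟩).2 (not_lt.mpr htb.le)
    obtain ⟨n, hn⟩ := exists_nat_gt (max (max Cx (2 / ρx)) (∑ i ∈ Finset.range (m + 1), |c i|))
    have hnC : Cx ≤ (n : ℝ) + 1 := by
      have := le_max_left Cx (2 / ρx)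
      have := le_max_left (max Cx (2 / ρx)) (∑ i ∈ Finset.range (m + 1), |c i|)
      linarith
    have hn2 : 2 / ((n:ℝ) + 1) < ρx := by
      have h1 : 2 / ρx < (n : ℝ) + 1 := by
        have := le_max_right Cx (2 / ρx)
        have := le_max_left (max Cx (2 / ρx)) (∑ i ∈ Finset.range (m + 1), |c i|)
        linarith
      rw [div_lt_iff₀ hρx] at h1
      rw [div_lt_iff₀ (by positivity)]
      nlinarith
    have hnsum : (∑ i ∈ Finset.range (m + 1), |c i|) ≤ (n : ℝ) + 1 := by
      have := le_max_right (max Cx (2 / ρx)) (∑ i ∈ Finset.range (m + 1), |c i|)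
      linarith
    refine Set.mem_iUnion.mpr ⟨n, ?_, fun i => if i ≤ m then c i else 0, ?_, ?_⟩
    · exact ⟨by linarith, by linarith⟩
    · intro i
      by_cases hi : i ≤ m
      · simp only [hi, if_true]
        have h1 : |c i| ≤ ∑ j ∈ Finset.range (m + 1), |c j| := by
          apply Finset.single_le_sum (fun j _ => abs_nonneg (c j))
          exact Finset.mem_range.mpr (Nat.lt_succ_of_le hi)
        linarith
      · simp only [hi, if_false, abs_zero]
        positivity
    · intro ρ hρ0 hρ1
      have hρρx : ρ < ρx := by
        have h1 : (1:ℝ) / ((n:ℝ) + 1) ≤ 2 / ((n:ℝ) + 1) := by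
          apply div_le_div_of_nonneg_right (by norm_num) (by positivity)
        linarith
      have hsumeq : ∀ y : ℝ, (∑ i ∈ Finset.range (m + 1),
          (if i ≤ m then c i else 0) * (y - x) ^ i)
          = ∑ i ∈ Finset.range (m + 1), c i * (y - x) ^ i := by
        intro y
        apply Finset.sum_congr rfl
        intro i hi
        rw [if_pos (Nat.lt_succ_iff.mp (Finset.mem_range.mp hi))]
      have h1 := hineq ρ hρ0 hρρx
      have hωρ : 0 ≤ ω ρ := by
        rw [← h0]
        exact hmono (Set.mem_Ici.mpr le_rfl) (Set.mem_Ici.mpr hρ0.le) hρ0.le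
      have h2 : Cx * ω ρ * ρ ^ m ≤ ((n:ℝ) + 1) * ω ρ * ρ ^ m := by
        have := mul_le_mul_of_nonneg_right
          (mul_le_mul_of_nonneg_right hnC hωρ) (pow_nonneg hρ0.le m)
        linarith
      calc (2 * ρ)⁻¹ * ∫ y in (x - ρ)..(x + ρ),
            |u y - ∑ i ∈ Finset.range (m + 1), (if i ≤ m then c i else 0) * (y - x) ^ i|
          = (2 * ρ)⁻¹ * ∫ y in (x - ρ)..(x + ρ),
            |u y - ∑ i ∈ Finset.range (m + 1), c i * (y - x) ^ i| := by
            congr 1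
            apply intervalIntegral.integral_congr
            intro y _
            simp only [hsumeq y]
        _ ≤ Cx * ω ρ * ρ ^ m := h1
        _ ≤ ((n:ℝ) + 1) * ω ρ * ρ ^ m := h2
  -- measure convergence
  have hEclosed : ∀ n, IsClosed (ESet a b m ω u n) := ESet_closed a b m ω u hu
  have hEmono : Monotone (ESet a b m ω u) := ESet_mono a b m ω u hmono h0
  have hnull : volume (Set.Ioo a b \ ⋃ n, ESet a b m ω u n) = 0 := by
    apply measure_eq_zero_iff_ae_notMem.mpr
    filter_upwards [hcov] with x hx
    rintro ⟨h1, h2⟩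
    exact h2 (hx h1)
  have hlim : Tendsto (fun n => volume (Set.Ioo a b \ ESet a b m ω u n)) atTop
      (nhds 0) := by
    have h1 := tendsto_measure_iInter_atTop (μ := volume)
      (s := fun n => Set.Ioo a b \ ESet a b m ω u n)
      (fun n => (measurableSet_Ioo.diff (hEclosed n).measurableSet).nullMeasurableSet)
      (fun i j hij => Set.diff_subset_diff_right (hEmono hij))
      ⟨0, by
        apply ne_of_lt
        exact lt_of_le_of_lt (measure_mono Set.diff_subset) measure_Ioo_lt_top⟩
    rw [← Set.diff_iUnion, hnull] at h1
    exact h1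
  have hev : ∀ᶠ n in atTop, volume (Set.Ioo a b \ ESet a b m ω u n) < ENNReal.ofReal ε := by
    apply hlim.eventually_lt_const
    exact ENNReal.ofReal_pos.mpr hε
  obtain ⟨n, hn⟩ := hev.exists
  refine ⟨ESet a b m ω u n,
    (isCompact_Icc).of_isClosed_subset (hEclosed n) ESet_subset_Icc,
    ESet_subset_Icc, ?_, (n : ℝ) + 1, by positivity, 1 / ((n:ℝ) + 1), by positivity, ?_⟩
  · -- measure bound
    have hsub : Set.Icc a b \ ESet a b m ω u n ⊆
        (Set.Ioo a b \ ESet a b m ω u n) ∪ {a, b} := by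
      rintro y ⟨hy1, hy2⟩
      by_cases hya : y = a
      · right; left; exact hya
      by_cases hyb : y = b
      · right; right; exact hyb
      left
      exact ⟨⟨lt_of_le_of_ne hy1.1 (Ne.symm hya), lt_of_le_of_ne hy1.2 hyb⟩, hy2⟩
    calc volume (Set.Icc a b \ ESet a b m ω u n)
        ≤ volume ((Set.Ioo a b \ ESet a b m ω u n) ∪ {a, b}) := measure_mono hsub
      _ ≤ volume (Set.Ioo a b \ ESet a b m ω u n) + volume ({a, b} : Set ℝ) :=
          measure_union_le _ _
      _ = volume (Set.Ioo a b \ ESet a b m ω u n) := by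
          rw [show volume ({a, b} : Set ℝ) = 0 from
            measure_union_null (measure_singleton a) (measure_singleton b), add_zero]
      _ < ENNReal.ofReal ε := hn
  · intro x hx
    obtain ⟨hxI, c, hcb, hc⟩ := hx
    have h2 : (2:ℝ) / ((n:ℝ) + 1) = 1 / ((n:ℝ) + 1) + 1 / ((n:ℝ) + 1) := by ring
    have h1 : (0:ℝ) < 1 / ((n:ℝ) + 1) := by positivity
    constructor
    · intro y hy
      exact ⟨by linarith [hxI.1, hy.1], by linarith [hxI.2, hy.2]⟩
    · exact ⟨c, hc⟩
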